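/- If (X, Y, Z) is a Markov triangle of finite random variables on a probability space (Ω, Σ, μ), then the mutual informations satisfy I(X, Z) = I(X, Y) + I(Y, Z) - I(Y, Y); in particular I(X, Z) ≤ I(X, Y) + I(Y, Z). -/
import Mathlib


open MeasureTheory Filter Topology

/-- A finite random variable on a measurable space `Ω`: a map into a finite set whose
fibers are measurable. -/
structure FRV (Ω : Type) [MeasurableSpace Ω] where
  α : Type
  fintype : Fintype α
  X : Ω → α
  meas : ∀ a : α, MeasurableSet (X ⁻¹' {a})

attribute [instance] FRV.fintype

/-- A probability distribution on a finite set. -/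
def IsProbDist {β : Type} [Fintype β] (p : β → ℝ) : Prop :=
  (∀ b, 0 ≤ p b) ∧ ∑ b, p b = 1

/-- Shannon entropy of a distribution on a finite set. -/
noncomputable def entropyOfDist {β : Type} [Fintype β] (p : β → ℝ) : ℝ :=
  -∑ b, p b * Real.log (p b)

namespace FRV

variable {Ω Ω' : Type} [MeasurableSpace Ω] [MeasurableSpace Ω']

/-- The probability mass function of a finite random variable. -/
noncomputable def pmf (μ : Measure Ω) (X : FRV Ω) : X.α → ℝ :=
  fun a => (μ (X.X ⁻¹' {a})).toReal

/-- The Shannon entropy of a finite random variable. -/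
noncomputable def entropy (μ : Measure Ω) (X : FRV Ω) : ℝ :=
  entropyOfDist (X.pmf μ)

/-- The canonical product `𝒫(X,Y)` of two finite random variables on a common space. -/
def prod (X Y : FRV Ω) : FRV Ω where
  α := X.α × Y.α
  fintype := inferInstance
  X := fun ω => (X.X ω, Y.X ω)
  meas := by
    rintro ⟨a, b⟩
    have h : (fun ω => (X.X ω, Y.X ω)) ⁻¹' {(a, b)} = X.X ⁻¹' {a} ∩ Y.X ⁻¹' {b} := by
      ext ω; simp [Prod.ext_iff]
    rw [h]
    exact (X.meas a).inter (Y.meas b)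

/-- Post-composition of a finite random variable with a map of finite sets. -/
def map (X : FRV Ω) {β : Type} [Fintype β] (f : X.α → β) : FRV Ω where
  α := β
  fintype := inferInstance
  X := f ∘ X.X
  meas := by
    intro b
    have h : (f ∘ X.X) ⁻¹' {b} = ⋃ a ∈ {a | f a = b}, X.X ⁻¹' {a} := by
      ext ω; simp
    rw [h]
    exact MeasurableSet.biUnion (Set.to_countable _) fun a _ => X.meas a

/-- Pullback of a finite random variable along a measurable map. -/
def comap (X : FRV Ω) (π : Ω' → Ω) (hπ : Measurable π) : FRV Ω' where
  α := X.α
  fintype := X.fintype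
  X := X.X ∘ π
  meas := by
    intro a
    rw [Set.preimage_comp]
    exact hπ (X.meas a)

/-- A constant random variable: one whose support is a one-element set. -/
def IsConstant (C : FRV Ω) : Prop := ∀ a b : C.α, a = b

/-- Weak convergence (convergence in distribution) of a sequence of finite random
variables: eventually the supports coincide, and the probability mass functions
converge pointwise. -/
def WeakConv (μ : Measure Ω) (Xs : ℕ → FRV Ω) (X : FRV Ω) : Prop :=
  (∃ N, ∀ n ≥ N, (Xs n).α = X.α) ∧
  ∀ a : X.α,
    Tendsto
      (fun n => @dite _ ((Xs n).α = X.α) (Classical.dec _)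
        (fun h => (Xs n).pmf μ (cast h.symm a)) (fun _ => 0))
      atTop (𝓝 (X.pmf μ a))

/-- Weak convergence of a sequence of pairs of finite random variables: weak convergence
of the canonical products. -/
def WeakConvPair (μ : Measure Ω) (Xs Ys : ℕ → FRV Ω) (X Y : FRV Ω) : Prop :=
  WeakConv μ (fun n => (Xs n).prod (Ys n)) (X.prod Y)

/-- The discrete measure on a finite set associated with a real-valued weight function. -/
noncomputable def discMeasure {𝒳 : Type} [Fintype 𝒳] [MeasurableSpace 𝒳] (p : 𝒳 → ℝ) :
    Measure 𝒳 :=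
  Measure.sum fun x => ENNReal.ofReal (p x) • Measure.dirac x

/-- The `p`-weighted convex sum of a family of finite random variables, a random variable
on `𝒳 × Ω` valued in the disjoint union `Σ x, 𝒴ˣ` (the weights `p` enter through the
product measure `(discMeasure p).prod μ` on `𝒳 × Ω`). -/
def convexSum {𝒳 : Type} [Fintype 𝒳] [MeasurableSpace 𝒳] [MeasurableSingletonClass 𝒳]
    (Y : 𝒳 → FRV Ω) : FRV (𝒳 × Ω) where
  α := Σ x : 𝒳, (Y x).α
  fintype := inferInstance
  X := fun q => ⟨q.1, (Y q.1).X q.2⟩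
  meas := by
    rintro ⟨x₀, y₀⟩
    have h : (fun q : 𝒳 × Ω => (⟨q.1, (Y q.1).X q.2⟩ : Σ x : 𝒳, (Y x).α)) ⁻¹' {⟨x₀, y₀⟩}
        = {x₀} ×ˢ ((Y x₀).X ⁻¹' {y₀}) := by
      ext ⟨x, ω⟩
      simp only [Set.mem_preimage, Set.mem_singleton_iff, Set.mem_prod, Sigma.mk.inj_iff]
      constructor
      · rintro ⟨rfl, h2⟩
        exact ⟨rfl, eq_of_heq h2⟩
      · rintro ⟨rfl, h2⟩
        exact ⟨rfl, heq_of_eq h2⟩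
    rw [h]
    exact (measurableSet_singleton x₀).prod ((Y x₀).meas y₀)

end FRV

section InfoMeasures

variable {Ω : Type} [MeasurableSpace Ω]

/-- The joint distribution function `ϑ(x,y) = μ(X⁻¹{x} ∩ Y⁻¹{y})` of a pair of finite
random variables. -/
noncomputable def jointDist (μ : Measure Ω) (X Y : FRV Ω) : X.α → Y.α → ℝ :=
  fun a b => (μ (X.X ⁻¹' {a} ∩ Y.X ⁻¹' {b})).toReal

/-- The joint entropy `H(X,Y)` of a pair of finite random variables. -/
noncomputable def jointEntropy (μ : Measure Ω) (X Y : FRV Ω) : ℝ :=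
  -∑ a, ∑ b, jointDist μ X Y a b * Real.log (jointDist μ X Y a b)

/-- The mutual information `I(X,Y) = H(X) + H(Y) - H(X,Y)`. -/
noncomputable def mutualInfo (μ : Measure Ω) (X Y : FRV Ω) : ℝ :=
  X.entropy μ + Y.entropy μ - jointEntropy μ X Y

/-- The conditional distribution `q(y|x)` of `Y` given `X = x`. -/
noncomputable def condDist (μ : Measure Ω) (X Y : FRV Ω) : X.α → Y.α → ℝ :=
  fun a b => if X.pmf μ a ≠ 0 then jointDist μ X Y a b / X.pmf μ a else 0

/-- The conditional entropy `H(Y|X) = ∑ₓ p(x) H(q(·|x))`. -/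
noncomputable def condEntropy (μ : Measure Ω) (X Y : FRV Ω) : ℝ :=
  ∑ a, X.pmf μ a * entropyOfDist (condDist μ X Y a)

/-- `h : 𝒵 × 𝒳 → 𝒴` is a mediator function for the triple `(X, Y, Z)` if
`r(z|x) = p(z|h(z,x)) · q(h(z,x)|x)` for all `(z,x)`. -/
def IsMediator (μ : Measure Ω) (X Y Z : FRV Ω) (h : Z.α × X.α → Y.α) : Prop :=
  ∀ z x, condDist μ X Z x z = condDist μ Y Z (h (z, x)) z * condDist μ X Y x (h (z, x))

/-- A triple `(X, Y, Z)` of finite random variables is a Markov triangle if it admits a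
mediator function. -/
def IsMarkovTriangle (μ : Measure Ω) (X Y Z : FRV Ω) : Prop :=
  ∃ h : Z.α × X.α → Y.α, IsMediator μ X Y Z h

end InfoMeasures

/-- A map assigning a real number to every ordered pair of finite random variables
defined on a common probability space. -/
abbrev PairFunctional :=
  ∀ (Ω : Type) [MeasurableSpace Ω], Measure Ω → FRV Ω → FRV Ω → ℝ

namespace PF

/-- `F` is non-negative. -/
def Nonneg (F : PairFunctional) : Prop :=
  ∀ (Ω : Type) [MeasurableSpace Ω] (μ : Measure Ω) [IsProbabilityMeasure μ]
    (X Y : FRV Ω), 0 ≤ F Ω μ X Y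

/-- `F` is symmetric. -/
def Symm (F : PairFunctional) : Prop :=
  ∀ (Ω : Type) [MeasurableSpace Ω] (μ : Measure Ω) [IsProbabilityMeasure μ]
    (X Y : FRV Ω), F Ω μ X Y = F Ω μ Y X

/-- `F` is continuous: it respects weak convergence of pairs. -/
def Continuous (F : PairFunctional) : Prop :=
  ∀ (Ω : Type) [MeasurableSpace Ω] (μ : Measure Ω) [IsProbabilityMeasure μ]
    (Xs Ys : ℕ → FRV Ω) (X Y : FRV Ω), FRV.WeakConvPair μ Xs Ys X Y →
    Tendsto (fun n => F Ω μ (Xs n) (Ys n)) atTop (𝓝 (F Ω μ X Y))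

/-- `F` is weakly functorial: `F(X,Z) = F(X,Y) + F(Y,Z) - F(Y,Y)` on Markov triangles. -/
def WeaklyFunctorial (F : PairFunctional) : Prop :=
  ∀ (Ω : Type) [MeasurableSpace Ω] (μ : Measure Ω) [IsProbabilityMeasure μ]
    (X Y Z : FRV Ω), IsMarkovTriangle μ X Y Z →
    F Ω μ X Z = F Ω μ X Y + F Ω μ Y Z - F Ω μ Y Y

/-- `F` is invariant under pullbacks along measure-preserving maps. -/
def PullbackInvariant (F : PairFunctional) : Prop :=
  ∀ (Ω Ω' : Type) [MeasurableSpace Ω] [MeasurableSpace Ω']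
    (μ : Measure Ω) (μ' : Measure Ω') [IsProbabilityMeasure μ] [IsProbabilityMeasure μ']
    (π : Ω' → Ω) (hπ : MeasurePreserving π μ' μ) (X Y : FRV Ω),
    F Ω μ X Y = F Ω' μ' (X.comap π hπ.measurable) (Y.comap π hπ.measurable)

/-- `F(X,C) = 0` for every constant random variable `C`. -/
def VanishesOnConstants (F : PairFunctional) : Prop :=
  ∀ (Ω : Type) [MeasurableSpace Ω] (μ : Measure Ω) [IsProbabilityMeasure μ]
    (X C : FRV Ω), C.IsConstant → F Ω μ X C = 0

/-- `F` is strongly additive: for a finite random variable `X` with probability mass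
function `p` and a family of pairs `(Yˣ, Zˣ)` indexed by the support of `X`,
`F(⊕ₓ p(x)(Yˣ,Zˣ)) = F(X,X) + ∑ₓ p(x) F(Yˣ,Zˣ)`. -/
def StronglyAdditive (F : PairFunctional) : Prop :=
  ∀ (Ω : Type) [MeasurableSpace Ω] (μ : Measure Ω) [IsProbabilityMeasure μ]
    (X : FRV Ω) (Y Z : X.α → FRV Ω),
    letI : MeasurableSpace X.α := ⊤
    letI : MeasurableSingletonClass X.α := ⟨fun _ => MeasurableSpace.measurableSet_top⟩
    F (X.α × Ω) ((FRV.discMeasure (X.pmf μ)).prod μ) (FRV.convexSum Y) (FRV.convexSum Z)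
      = F Ω μ X X + ∑ x, X.pmf μ x * F Ω μ (Y x) (Z x)

end PF

/-- Mutual information as a pair functional. -/
noncomputable def MIfun : PairFunctional := fun _ _ μ X Y => mutualInfo μ X Y

section MIAux
set_option linter.unusedSectionVars false
open scoped Classical

open Finset

variable {Ω : Type} [MeasurableSpace Ω] (μ : Measure Ω) [IsProbabilityMeasure μ]

lemma jd_nonneg (X Y : FRV Ω) (a : X.α) (b : Y.α) : 0 ≤ jointDist μ X Y a b :=
  ENNReal.toReal_nonneg

lemma pmf_nonneg' (X : FRV Ω) (a : X.α) : 0 ≤ X.pmf μ a := ENNReal.toReal_nonneg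

lemma pmf_le_one' (X : FRV Ω) (a : X.α) : X.pmf μ a ≤ 1 := by
  unfold FRV.pmf
  rw [show (1:ℝ) = (1 : ENNReal).toReal by simp]
  exact ENNReal.toReal_mono (by simp) (prob_le_one)

lemma jd_comm (X Y : FRV Ω) (a : X.α) (b : Y.α) :
    jointDist μ X Y a b = jointDist μ Y X b a := by
  unfold jointDist; rw [Set.inter_comm]

lemma sum_jd (X Y : FRV Ω) (a : X.α) : ∑ b, jointDist μ X Y a b = X.pmf μ a := by
  classical
  have hdecomp : X.X ⁻¹' {a} = ⋃ b ∈ (univ : Finset Y.α), (X.X ⁻¹' {a} ∩ Y.X ⁻¹' {b}) := by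
    ext ω
    simp only [Set.mem_iUnion, Set.mem_inter_iff, Set.mem_preimage, Set.mem_singleton_iff,
      mem_univ, exists_prop, true_and]
    exact ⟨fun hx => ⟨Y.X ω, hx, rfl⟩, fun ⟨b, hx, _⟩ => hx⟩
  have hdisj : (↑(univ : Finset Y.α) : Set Y.α).PairwiseDisjoint
      (fun b => X.X ⁻¹' {a} ∩ Y.X ⁻¹' {b}) := by
    intro b _ c _ hbc
    refine Set.disjoint_left.2 ?_
    rintro ω ⟨_, h1⟩ ⟨_, h2⟩
    exact hbc ((Set.mem_singleton_iff.1 h1).symm.trans (Set.mem_singleton_iff.1 h2))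
  have hmeas : ∀ b ∈ (univ : Finset Y.α), MeasurableSet (X.X ⁻¹' {a} ∩ Y.X ⁻¹' {b}) :=
    fun b _ => (X.meas a).inter (Y.meas b)
  unfold jointDist FRV.pmf
  conv_rhs => rw [hdecomp, measure_biUnion_finset hdisj hmeas]
  rw [ENNReal.toReal_sum fun b _ => measure_ne_top μ _]

lemma jd_le_left (X Y : FRV Ω) (a : X.α) (b : Y.α) :
    jointDist μ X Y a b ≤ X.pmf μ a :=
  ENNReal.toReal_mono (measure_ne_top μ _) (measure_mono Set.inter_subset_left)

lemma jd_le_right (X Y : FRV Ω) (a : X.α) (b : Y.α) :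
    jointDist μ X Y a b ≤ Y.pmf μ b :=
  ENNReal.toReal_mono (measure_ne_top μ _) (measure_mono Set.inter_subset_right)

lemma jd_zero_left (X Y : FRV Ω) {a : X.α} (ha : X.pmf μ a = 0) (b : Y.α) :
    jointDist μ X Y a b = 0 :=
  le_antisymm (ha ▸ jd_le_left μ X Y a b) (jd_nonneg μ X Y a b)

lemma jd_zero_right (X Y : FRV Ω) (a : X.α) {b : Y.α} (hb : Y.pmf μ b = 0) :
    jointDist μ X Y a b = 0 :=
  le_antisymm (hb ▸ jd_le_right μ X Y a b) (jd_nonneg μ X Y a b)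

lemma cd_nonneg (X Y : FRV Ω) (a : X.α) (b : Y.α) : 0 ≤ condDist μ X Y a b := by
  unfold condDist
  split
  · exact div_nonneg (jd_nonneg μ X Y a b) (pmf_nonneg' μ X a)
  · exact le_refl 0

lemma sum_cd (X Y : FRV Ω) {a : X.α} (ha : X.pmf μ a ≠ 0) :
    ∑ b, condDist μ X Y a b = 1 := by
  unfold condDist
  simp only [ha, ne_eq, not_false_iff, if_true]
  rw [← Finset.sum_div, sum_jd, div_self ha]

lemma sum_cd_le_one (X Y : FRV Ω) (a : X.α) : ∑ b, condDist μ X Y a b ≤ 1 := by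
  by_cases ha : X.pmf μ a = 0
  · unfold condDist
    simp [ha]
  · exact le_of_eq (sum_cd μ X Y ha)

lemma jd_eq_cd_mul (X Y : FRV Ω) {a : X.α} (ha : X.pmf μ a ≠ 0) (b : Y.α) :
    jointDist μ X Y a b = condDist μ X Y a b * X.pmf μ a := by
  unfold condDist
  rw [if_pos ha, div_mul_cancel₀ _ ha]

lemma cd_ne_zero (X Y : FRV Ω) {a : X.α} {b : Y.α} (ha : X.pmf μ a ≠ 0)
    (hab : jointDist μ X Y a b ≠ 0) : condDist μ X Y a b ≠ 0 := by
  unfold condDist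
  rw [if_pos ha]
  exact div_ne_zero hab ha

lemma cd_zero_of_jd (X Y : FRV Ω) {a : X.α} {b : Y.α}
    (hab : jointDist μ X Y a b = 0) : condDist μ X Y a b = 0 := by
  unfold condDist
  split
  · rw [hab, zero_div]
  · rfl

noncomputable def thd (X Y Z : FRV Ω) (x : X.α) (y : Y.α) (z : Z.α) : ℝ :=
  jointDist μ X Y x y * condDist μ Y Z y z

lemma cd_components (X Y : FRV Ω) {a : X.α} {b : Y.α} (hc : condDist μ X Y a b ≠ 0) :
    X.pmf μ a ≠ 0 ∧ jointDist μ X Y a b ≠ 0 := by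
  unfold condDist at hc
  by_cases ha : X.pmf μ a ≠ 0
  · refine ⟨ha, ?_⟩
    rw [if_pos ha] at hc
    intro h0
    rw [h0, zero_div] at hc
    exact hc rfl
  · rw [if_neg ha] at hc
    exact absurd rfl hc

lemma keyA (X Y Z : FRV Ω) (h : Z.α × X.α → Y.α) (hmed : IsMediator μ X Y Z h)
    {x : X.α} {y : Y.α} (hx : X.pmf μ x ≠ 0) (hxy : jointDist μ X Y x y ≠ 0) :
    ∑ z, (if h (z, x) = y then condDist μ Y Z y z else 0) = 1 := by
  classical
  set g : Y.α → ℝ := fun y' => ∑ z, (if h (z, x) = y' then condDist μ Y Z y' z else 0) with hg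
  have hg_le : ∀ y', g y' ≤ 1 := by
    intro y'
    refine le_trans (Finset.sum_le_sum fun z _ => ?_) (sum_cd_le_one μ Y Z y')
    split
    · exact le_refl _
    · exact cd_nonneg μ Y Z _ _
  have htot : ∑ y', condDist μ X Y x y' * g y' = 1 := by
    have h1 : ∀ y', condDist μ X Y x y' * g y'
        = ∑ z, (if h (z, x) = y' then condDist μ Y Z y' z * condDist μ X Y x y' else 0) := by
      intro y'
      rw [hg, Finset.mul_sum]
      refine Finset.sum_congr rfl fun z _ => ?_
      split
      · ring
      · ring
    simp only [h1]
    rw [Finset.sum_comm]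
    have h2 : ∀ z, (∑ y', if h (z, x) = y' then condDist μ Y Z y' z * condDist μ X Y x y' else 0)
        = condDist μ X Z x z := by
      intro z
      rw [Finset.sum_ite_eq]
      simp only [Finset.mem_univ, if_true]
      exact (hmed z x).symm
    simp only [h2]
    exact sum_cd μ X Z hx
  have hsum1 : ∑ y', condDist μ X Y x y' = 1 := sum_cd μ X Y hx
  have hzero : ∑ y', condDist μ X Y x y' * (1 - g y') = 0 := by
    simp only [mul_sub, mul_one, Finset.sum_sub_distrib, hsum1, htot, sub_self]
  have hnn : ∀ y' ∈ Finset.univ, (0:ℝ) ≤ condDist μ X Y x y' * (1 - g y') := by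
    intro y' _
    exact mul_nonneg (cd_nonneg μ X Y x y') (by linarith [hg_le y'])
  have hy := (Finset.sum_eq_zero_iff_of_nonneg hnn).1 hzero y (Finset.mem_univ y)
  have hq : condDist μ X Y x y ≠ 0 := cd_ne_zero μ X Y hx hxy
  have : 1 - g y = 0 := by
    rcases mul_eq_zero.1 hy with h' | h'
    · exact absurd h' hq
    · exact h'
  linarith

lemma keyB (X Y Z : FRV Ω) (h : Z.α × X.α → Y.α) (hmed : IsMediator μ X Y Z h)
    {x : X.α} {y : Y.α} {z : Z.α} (hxy : jointDist μ X Y x y ≠ 0)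
    (hyz : jointDist μ Y Z y z ≠ 0) : h (z, x) = y := by
  have hx : X.pmf μ x ≠ 0 := fun h0 => hxy (jd_zero_left μ X Y h0 y)
  have hy : Y.pmf μ y ≠ 0 := fun h0 => hyz (jd_zero_left μ Y Z h0 z)
  have hA := keyA μ X Y Z h hmed hx hxy
  have hsum : ∑ z', condDist μ Y Z y z' = 1 := sum_cd μ Y Z hy
  have hzero : ∑ z', (condDist μ Y Z y z'
      - (if h (z', x) = y then condDist μ Y Z y z' else 0)) = 0 := by
    rw [Finset.sum_sub_distrib, hsum, hA, sub_self]
  have hnn : ∀ z' ∈ Finset.univ, (0:ℝ) ≤ condDist μ Y Z y z'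
      - (if h (z', x) = y then condDist μ Y Z y z' else 0) := by
    intro z' _
    split
    · simp
    · simpa using cd_nonneg μ Y Z y z'
  have hz := (Finset.sum_eq_zero_iff_of_nonneg hnn).1 hzero z (Finset.mem_univ z)
  by_contra hne
  rw [if_neg hne, sub_zero] at hz
  exact cd_ne_zero μ Y Z hy hyz hz

lemma th_components (X Y Z : FRV Ω) {x : X.α} {y : Y.α} {z : Z.α}
    (hθ : thd μ X Y Z x y z ≠ 0) :
    jointDist μ X Y x y ≠ 0 ∧ jointDist μ Y Z y z ≠ 0 ∧ Y.pmf μ y ≠ 0 := by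
  unfold thd at hθ
  rcases mul_ne_zero_iff.1 hθ with ⟨h1, h2⟩
  obtain ⟨hy, hyz⟩ := cd_components μ Y Z h2
  exact ⟨h1, hyz, hy⟩

lemma th_eq (X Y Z : FRV Ω) {y : Y.α} (hy : Y.pmf μ y ≠ 0) (x : X.α) (z : Z.α) :
    thd μ X Y Z x y z = jointDist μ X Y x y * jointDist μ Y Z y z / Y.pmf μ y := by
  unfold thd condDist
  rw [if_pos hy, mul_div_assoc]

lemma th_sum_z (X Y Z : FRV Ω) (x : X.α) (y : Y.α) :
    ∑ z, thd μ X Y Z x y z = jointDist μ X Y x y := by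
  unfold thd
  rw [← Finset.mul_sum]
  by_cases hy : Y.pmf μ y = 0
  · rw [jd_zero_right μ X Y x hy, zero_mul]
  · rw [sum_cd μ Y Z hy, mul_one]

lemma th_sum_x (X Y Z : FRV Ω) (y : Y.α) (z : Z.α) :
    ∑ x, thd μ X Y Z x y z = jointDist μ Y Z y z := by
  unfold thd
  rw [← Finset.sum_mul]
  have hs : ∑ x, jointDist μ X Y x y = Y.pmf μ y := by
    rw [Finset.sum_congr rfl fun x _ => jd_comm μ X Y x y]
    exact sum_jd μ Y X y
  rw [hs]
  by_cases hy : Y.pmf μ y = 0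
  · rw [hy, zero_mul, jd_zero_left μ Y Z hy z]
  · rw [jd_eq_cd_mul μ Y Z hy z, mul_comm]

lemma jd_eq_th (X Y Z : FRV Ω) (h : Z.α × X.α → Y.α) (hmed : IsMediator μ X Y Z h)
    {x : X.α} (hx : X.pmf μ x ≠ 0) (z : Z.α) :
    jointDist μ X Z x z = thd μ X Y Z x (h (z, x)) z := by
  rw [jd_eq_cd_mul μ X Z hx z, hmed z x]
  unfold thd
  rw [jd_eq_cd_mul μ X Y hx (h (z, x))]
  ring

lemma sum_identity (X Y Z : FRV Ω) (h : Z.α × X.α → Y.α) (hmed : IsMediator μ X Y Z h) :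
    (∑ x, ∑ z, jointDist μ X Z x z * Real.log (jointDist μ X Z x z))
      = (∑ x, ∑ y, jointDist μ X Y x y * Real.log (jointDist μ X Y x y))
        + (∑ y, ∑ z, jointDist μ Y Z y z * Real.log (jointDist μ Y Z y z))
        - ∑ y, Y.pmf μ y * Real.log (Y.pmf μ y) := by
  classical
  have stepA : ∀ x z, jointDist μ X Z x z * Real.log (jointDist μ X Z x z)
      = ∑ y, thd μ X Y Z x y z * Real.log (thd μ X Y Z x y z) := by
    intro x z
    by_cases hx : X.pmf μ x = 0
    · rw [jd_zero_left μ X Z hx z, zero_mul]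
      symm
      apply Finset.sum_eq_zero
      intro y _
      unfold thd
      rw [jd_zero_left μ X Y hx y, zero_mul, zero_mul]
    · rw [jd_eq_th μ X Y Z h hmed hx z]
      rw [Finset.sum_eq_single (h (z, x))]
      · intro y _ hy
        by_cases hθ : thd μ X Y Z x y z = 0
        · rw [hθ, zero_mul]
        · obtain ⟨hxy, hyz, _⟩ := th_components μ X Y Z hθ
          exact absurd (keyB μ X Y Z h hmed hxy hyz).symm hy
      · intro habs
        exact absurd (Finset.mem_univ _) habs
  have stepB : ∀ x y z, thd μ X Y Z x y z * Real.log (thd μ X Y Z x y z)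
      = thd μ X Y Z x y z * Real.log (jointDist μ X Y x y)
        + thd μ X Y Z x y z * Real.log (jointDist μ Y Z y z)
        - thd μ X Y Z x y z * Real.log (Y.pmf μ y) := by
    intro x y z
    by_cases hθ : thd μ X Y Z x y z = 0
    · rw [hθ]
      ring
    · obtain ⟨hxy, hyz, hy⟩ := th_components μ X Y Z hθ
      rw [th_eq μ X Y Z hy, Real.log_div (mul_ne_zero hxy hyz) hy, Real.log_mul hxy hyz]
      ring
  have expand : (∑ x, ∑ z, jointDist μ X Z x z * Real.log (jointDist μ X Z x z))
      = ∑ x, ∑ z, ∑ y, (thd μ X Y Z x y z * Real.log (jointDist μ X Y x y)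
          + thd μ X Y Z x y z * Real.log (jointDist μ Y Z y z)
          - thd μ X Y Z x y z * Real.log (Y.pmf μ y)) := by
    refine Finset.sum_congr rfl fun x _ => Finset.sum_congr rfl fun z _ => ?_
    rw [stepA x z]
    exact Finset.sum_congr rfl fun y _ => stepB x y z
  rw [expand]
  simp only [Finset.sum_add_distrib, Finset.sum_sub_distrib]
  have e1 : (∑ x, ∑ z, ∑ y, thd μ X Y Z x y z * Real.log (jointDist μ X Y x y))
      = ∑ x, ∑ y, jointDist μ X Y x y * Real.log (jointDist μ X Y x y) := by
    refine Finset.sum_congr rfl fun x _ => ?_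
    rw [Finset.sum_comm]
    refine Finset.sum_congr rfl fun y _ => ?_
    rw [← Finset.sum_mul, th_sum_z]
  have e2 : (∑ x, ∑ z, ∑ y, thd μ X Y Z x y z * Real.log (jointDist μ Y Z y z))
      = ∑ y, ∑ z, jointDist μ Y Z y z * Real.log (jointDist μ Y Z y z) := by
    calc (∑ x, ∑ z, ∑ y, thd μ X Y Z x y z * Real.log (jointDist μ Y Z y z))
        = ∑ x, ∑ y, ∑ z, thd μ X Y Z x y z * Real.log (jointDist μ Y Z y z) :=
          Finset.sum_congr rfl fun x _ => Finset.sum_comm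
      _ = ∑ y, ∑ x, ∑ z, thd μ X Y Z x y z * Real.log (jointDist μ Y Z y z) :=
          Finset.sum_comm
      _ = ∑ y, ∑ z, ∑ x, thd μ X Y Z x y z * Real.log (jointDist μ Y Z y z) :=
          Finset.sum_congr rfl fun y _ => Finset.sum_comm
      _ = ∑ y, ∑ z, jointDist μ Y Z y z * Real.log (jointDist μ Y Z y z) := by
          refine Finset.sum_congr rfl fun y _ => Finset.sum_congr rfl fun z _ => ?_
          rw [← Finset.sum_mul, th_sum_x]
  have e3 : (∑ x, ∑ z, ∑ y, thd μ X Y Z x y z * Real.log (Y.pmf μ y))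
      = ∑ y, Y.pmf μ y * Real.log (Y.pmf μ y) := by
    calc (∑ x, ∑ z, ∑ y, thd μ X Y Z x y z * Real.log (Y.pmf μ y))
        = ∑ x, ∑ y, ∑ z, thd μ X Y Z x y z * Real.log (Y.pmf μ y) :=
          Finset.sum_congr rfl fun x _ => Finset.sum_comm
      _ = ∑ y, ∑ x, ∑ z, thd μ X Y Z x y z * Real.log (Y.pmf μ y) :=
          Finset.sum_comm
      _ = ∑ y, ∑ z, ∑ x, thd μ X Y Z x y z * Real.log (Y.pmf μ y) :=
          Finset.sum_congr rfl fun y _ => Finset.sum_comm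
      _ = ∑ y, Y.pmf μ y * Real.log (Y.pmf μ y) := by
          refine Finset.sum_congr rfl fun y _ => ?_
          have : ∀ z : Z.α, (∑ x, thd μ X Y Z x y z * Real.log (Y.pmf μ y))
              = jointDist μ Y Z y z * Real.log (Y.pmf μ y) := by
            intro z
            rw [← Finset.sum_mul, th_sum_x]
          simp only [this]
          rw [← Finset.sum_mul, sum_jd]
  rw [e1, e2, e3]

lemma jd_self (Y : FRV Ω) (a b : Y.α) :
    jointDist μ Y Y a b = if b = a then Y.pmf μ a else 0 := by
  unfold jointDist FRV.pmf
  by_cases hab : b = a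
  · rw [if_pos hab, hab, Set.inter_self]
  · rw [if_neg hab]
    have : Y.X ⁻¹' {a} ∩ Y.X ⁻¹' {b} = ∅ := by
      ext ω
      simp only [Set.mem_inter_iff, Set.mem_preimage, Set.mem_singleton_iff,
        Set.mem_empty_iff_false, iff_false, not_and]
      intro h1 h2
      exact hab (h2.symm.trans h1)
    rw [this]
    simp

lemma jointEntropy_self (Y : FRV Ω) : jointEntropy μ Y Y = Y.entropy μ := by
  unfold jointEntropy FRV.entropy entropyOfDist
  congr 1
  refine Finset.sum_congr rfl fun a _ => ?_
  rw [Finset.sum_eq_single a]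
  · rw [jd_self μ Y a a, if_pos rfl]
  · intro b _ hb
    rw [jd_self μ Y a b, if_neg hb, zero_mul]
  · intro habs
    exact absurd (Finset.mem_univ _) habs

lemma entropy_nonneg' (Y : FRV Ω) : 0 ≤ Y.entropy μ := by
  unfold FRV.entropy entropyOfDist
  rw [neg_nonneg]
  apply Finset.sum_nonpos
  intro b _
  have h1 := pmf_nonneg' μ Y b
  have h2 := Real.log_nonpos h1 (pmf_le_one' μ Y b)
  nlinarith

end MIAux

/-- If `(X,Y,Z)` is a Markov triangle, then
`I(X,Z) = I(X,Y) + I(Y,Z) - I(Y,Y)`; in particular `I(X,Z) ≤ I(X,Y) + I(Y,Z)`. -/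
theorem mutualInfo_markovTriangle {Ω : Type} [MeasurableSpace Ω] (μ : Measure Ω)
    [IsProbabilityMeasure μ] (X Y Z : FRV Ω) (h : IsMarkovTriangle μ X Y Z) :
    mutualInfo μ X Z = mutualInfo μ X Y + mutualInfo μ Y Z - mutualInfo μ Y Y ∧
      mutualInfo μ X Z ≤ mutualInfo μ X Y + mutualInfo μ Y Z := by
  obtain ⟨hmap, hmed⟩ := h
  have hS := sum_identity μ X Y Z hmap hmed
  have hJ : jointEntropy μ X Z = jointEntropy μ X Y + jointEntropy μ Y Z - Y.entropy μ := by
    unfold jointEntropy FRV.entropy entropyOfDist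
    linarith [hS]
  have hYY := jointEntropy_self μ Y
  have hnn := entropy_nonneg' μ Y
  unfold mutualInfo
  constructor
  · linarith
  · linarith
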